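/- With F₁,...,Fₖ defined as above from δ₁,...,δₖ and O ⊆ {1,...,k}: if t₁ ∈ F₁ then there exists t ≥ t₁ and a partition of [t₁,t] into nonempty consecutive order-convex intervals I₁ < ... < Iₖ with Iⱼ ⊆ δⱼ for all j and Iⱼ a singleton for each j ∈ O. -/

import Mathlib

def Until {T : Type*} [LinearOrder T] (A B : Set T) (t : T) : Prop :=
  ∃ t', t < t' ∧ t' ∈ B ∧ ∀ y, t < y → y < t' → y ∈ A

/-- Order-convexity of a set. -/
def IsConvex {T : Type*} [LinearOrder T] (I : Set T) : Prop :=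
  ∀ a ∈ I, ∀ b ∈ I, ∀ c, a ≤ c → c ≤ b → c ∈ I

/-- (P Until* Q) holds at t: some closed interval [t,t'] with t' > t splits into
nonempty convex pieces I₁ < I₂ with I₁ ⊆ P, I₂ ⊆ Q. -/
def UntilStar {T : Type*} [LinearOrder T] (P Q : Set T) (t : T) : Prop :=
  ∃ t', t < t' ∧ ∃ I₁ I₂ : Set T,
    I₁.Nonempty ∧ I₂.Nonempty ∧ IsConvex I₁ ∧ IsConvex I₂ ∧
    I₁ ∪ I₂ = Set.Icc t t' ∧ Disjoint I₁ I₂ ∧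
    (∀ a ∈ I₁, ∀ b ∈ I₂, a < b) ∧ I₁ ⊆ P ∧ I₂ ⊆ Q

/-- A partition of [a,b] into consecutive nonempty convex intervals I 0 < I 1 < … -/
def IsDecomp {T : Type*} [LinearOrder T] (a b : T) {k : ℕ} (I : Fin k → Set T) : Prop :=
  (∀ j, (I j).Nonempty) ∧ (∀ j, IsConvex (I j)) ∧
    (∀ i j : Fin k, i < j → ∀ x ∈ I i, ∀ y ∈ I j, x < y) ∧
    (⋃ j, I j) = Set.Icc a b

/-- The defining equations of the formulas F₁,…,F_{k} from δ₁,…,δ_k and O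
 (here k = n+1, indices are 0-based). `Until ∅` expresses `False Until`,
 i.e. "the successor of t exists and lies in …". -/
def DefinesF {T : Type*} [LinearOrder T] {n : ℕ} (δ F : Fin (n + 1) → Set T)
    (O : Finset (Fin (n + 1))) : Prop :=
  F (Fin.last n) = δ (Fin.last n) ∧
    ∀ i : Fin n,
      F i.castSucc = δ i.castSucc ∩ {t |
        if i.castSucc ∈ O then
          (if i.succ ∈ O then Until (∅ : Set T) (F i.succ) t
           else Until (δ i.succ) (F i.succ) t)
        else
          (if i.succ ∈ O then Until (δ i.castSucc) (F i.succ) t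
           else UntilStar (δ i.castSucc) (F i.succ) t)}

lemma isConvex_empty' {T : Type*} [LinearOrder T] : IsConvex (∅ : Set T) := by
  intro a ha; exact absurd ha (Set.notMem_empty a)

lemma isConvex_singleton' {T : Type*} [LinearOrder T] (x : T) : IsConvex ({x} : Set T) := by
  intro a ha b hb c hac hcb
  simp only [Set.mem_singleton_iff] at *
  subst ha; subst hb; exact le_antisymm hcb hac

lemma isConvex_Ico' {T : Type*} [LinearOrder T] (x y : T) : IsConvex (Set.Ico x y) := by
  rintro a ⟨ha1, _⟩ b ⟨_, hb2⟩ c hac hcb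
  exact ⟨ha1.trans hac, lt_of_le_of_lt hcb hb2⟩

lemma isConvex_Ioo' {T : Type*} [LinearOrder T] (x y : T) : IsConvex (Set.Ioo x y) := by
  rintro a ⟨ha1, _⟩ b ⟨_, hb2⟩ c hac hcb
  exact ⟨lt_of_lt_of_le ha1 hac, lt_of_le_of_lt hcb hb2⟩

lemma F_sub_delta {T : Type*} [LinearOrder T] {n : ℕ} {δ F : Fin (n + 1) → Set T}
    {O : Finset (Fin (n + 1))} (hF : DefinesF δ F O) (i : Fin (n + 1)) : F i ⊆ δ i := by
  rcases Fin.eq_castSucc_or_eq_last i with ⟨j, rfl⟩ | rfl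
  · rw [hF.2 j]; exact Set.inter_subset_left
  · rw [hF.1]

lemma step_lemma {T : Type*} [LinearOrder T] {n : ℕ} (δ : Fin (n + 2) → Set T)
    (O : Finset (Fin (n + 2))) (t₁ t₂ : T) (h12 : t₁ < t₂)
    (A E : Set T) (hAne : A.Nonempty) (hAcx : IsConvex A) (hEcx : IsConvex E)
    (hAδ : A ⊆ δ 0) (hEδ : E ⊆ δ 1)
    (hAsub : A ⊆ Set.Ico t₁ t₂) (hEsub : E ⊆ Set.Icc t₁ t₂)
    (hAE : ∀ a ∈ A, ∀ e ∈ E, a < e)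
    (hcover : Set.Ico t₁ t₂ ⊆ A ∪ E)
    (hAO : (0 : Fin (n + 2)) ∈ O → ∃ x, A = {x})
    (hEO : (1 : Fin (n + 2)) ∈ O → E = ∅)
    (t : T) (h2t : t₂ ≤ t) (J : Fin (n + 1) → Set T)
    (hJ : IsDecomp t₂ t J) (hJδ : ∀ j, J j ⊆ δ j.succ)
    (hJO : ∀ j : Fin (n + 1), j.succ ∈ O → ∃ x, J j = {x}) :
    ∃ t, t₁ ≤ t ∧ ∃ I : Fin (n + 2) → Set T,
      IsDecomp t₁ t I ∧ (∀ j, I j ⊆ δ j) ∧ (∀ j ∈ O, ∃ x, I j = {x}) := by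
  obtain ⟨hJne, hJcx, hJord, hJun⟩ := hJ
  have hJsub : ∀ j, J j ⊆ Set.Icc t₂ t := by
    intro j x hx
    rw [← hJun]; exact Set.mem_iUnion.mpr ⟨j, hx⟩
  have ht₂J0 : t₂ ∈ J 0 := by
    have ht₂mem : t₂ ∈ ⋃ j, J j := by rw [hJun]; exact ⟨le_refl _, h2t⟩
    obtain ⟨m, hm⟩ := Set.mem_iUnion.mp ht₂mem
    rcases eq_or_ne m 0 with rfl | hne
    · exact hm
    · exfalso
      obtain ⟨x, hx⟩ := hJne 0
      have hlt : x < t₂ := hJord 0 m (Fin.pos_of_ne_zero hne) x hx t₂ hm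
      exact absurd (hJsub 0 hx).1 (not_le.mpr hlt)
  set S : Set T := E ∪ J 0 with hS
  have hScx : IsConvex S := by
    rintro a (ha | ha) b (hb | hb) c hac hcb
    · exact Or.inl (hEcx a ha b hb c hac hcb)
    · rcases lt_or_ge c t₂ with h | h
      · left
        have hc : c ∈ Set.Ico t₁ t₂ := ⟨(hEsub ha).1.trans hac, h⟩
        rcases hcover hc with hcA | hcE
        · exact absurd hac (not_le.mpr (hAE c hcA a ha))
        · exact hcE
      · exact Or.inr (hJcx 0 t₂ ht₂J0 b hb c h hcb)
    · have h1 : t₂ ≤ a := (hJsub 0 ha).1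
      have h2 : b ≤ t₂ := (hEsub hb).2
      have : c = t₂ := le_antisymm (hcb.trans h2) (h1.trans hac)
      exact Or.inr (this ▸ ht₂J0)
    · exact Or.inr (hJcx 0 a ha b hb c hac hcb)
  refine ⟨t, le_of_lt (lt_of_lt_of_le h12 h2t),
    Fin.cons A (Function.update J 0 S), ?_, ?_, ?_⟩
  · refine ⟨?_, ?_, ?_, ?_⟩
    · intro j
      rcases Fin.eq_zero_or_eq_succ j with rfl | ⟨j', rfl⟩
      · simpa using hAne
      · rw [Fin.cons_succ]
        rcases eq_or_ne j' 0 with rfl | hne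
        · rw [Function.update_self]
          exact (hJne 0).mono Set.subset_union_right
        · rw [Function.update_of_ne hne]
          exact hJne j'
    · intro j
      rcases Fin.eq_zero_or_eq_succ j with rfl | ⟨j', rfl⟩
      · simpa using hAcx
      · rw [Fin.cons_succ]
        rcases eq_or_ne j' 0 with rfl | hne
        · rw [Function.update_self]; exact hScx
        · rw [Function.update_of_ne hne]; exact hJcx j'
    · intro i j hij x hx y hy
      rcases Fin.eq_zero_or_eq_succ j with rfl | ⟨j', rfl⟩
      · exact absurd hij (Fin.not_lt_zero i)
      rcases Fin.eq_zero_or_eq_succ i with rfl | ⟨i', rfl⟩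
      · -- x ∈ A
        rw [Fin.cons_zero] at hx
        have hx2 : x < t₂ := (hAsub hx).2
        rw [Fin.cons_succ] at hy
        have : y ∈ E ∨ t₂ ≤ y := by
          rcases eq_or_ne j' 0 with rfl | hne
          · rw [Function.update_self] at hy
            rcases hy with hy | hy
            · exact Or.inl hy
            · exact Or.inr (hJsub 0 hy).1
          · rw [Function.update_of_ne hne] at hy
            exact Or.inr (hJsub j' hy).1
        rcases this with hyE | hyt
        · exact hAE x hx y hyE
        · exact lt_of_lt_of_le hx2 hyt
      · -- both successors
        have hij' : i' < j' := by
          rwa [Fin.succ_lt_succ_iff] at hij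
        have hj'ne : j' ≠ 0 := Fin.pos_iff_ne_zero.mp (lt_of_le_of_lt (Fin.zero_le i') hij')
        rw [Fin.cons_succ, Function.update_of_ne hj'ne] at hy
        rw [Fin.cons_succ] at hx
        rcases eq_or_ne i' 0 with rfl | hne
        · rw [Function.update_self] at hx
          have hty : t₂ < y := hJord 0 j' hij' t₂ ht₂J0 y hy
          rcases hx with hx | hx
          · exact lt_of_le_of_lt (hEsub hx).2 hty
          · exact hJord 0 j' hij' x hx y hy
        · rw [Function.update_of_ne hne] at hx
          exact hJord i' j' hij' x hx y hy
    · apply Set.eq_of_subset_of_subset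
      · intro x hx
        obtain ⟨m, hm⟩ := Set.mem_iUnion.mp hx
        have ht1t : t₁ ≤ t := le_of_lt (lt_of_lt_of_le h12 h2t)
        rcases Fin.eq_zero_or_eq_succ m with rfl | ⟨m', rfl⟩
        · rw [Fin.cons_zero] at hm
          exact ⟨(hAsub hm).1, le_trans (le_of_lt (hAsub hm).2) h2t⟩
        · rw [Fin.cons_succ] at hm
          rcases eq_or_ne m' 0 with rfl | hne
          · rw [Function.update_self] at hm
            rcases hm with hm | hm
            · exact ⟨(hEsub hm).1, le_trans (hEsub hm).2 h2t⟩
            · exact ⟨le_trans (le_of_lt h12) (hJsub 0 hm).1, (hJsub 0 hm).2⟩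
          · rw [Function.update_of_ne hne] at hm
            exact ⟨le_trans (le_of_lt h12) (hJsub m' hm).1, (hJsub m' hm).2⟩
      · intro x hx
        rcases lt_or_ge x t₂ with h | h
        · rcases hcover ⟨hx.1, h⟩ with hxA | hxE
          · exact Set.mem_iUnion.mpr ⟨0, by simpa using hxA⟩
          · refine Set.mem_iUnion.mpr ⟨Fin.succ 0, ?_⟩
            rw [Fin.cons_succ, Function.update_self]
            exact Or.inl hxE
        · have : x ∈ ⋃ j, J j := by rw [hJun]; exact ⟨h, hx.2⟩
          obtain ⟨m, hm⟩ := Set.mem_iUnion.mp this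
          refine Set.mem_iUnion.mpr ⟨Fin.succ m, ?_⟩
          rw [Fin.cons_succ]
          rcases eq_or_ne m 0 with rfl | hne
          · rw [Function.update_self]; exact Or.inr hm
          · rw [Function.update_of_ne hne]; exact hm
  · intro j
    rcases Fin.eq_zero_or_eq_succ j with rfl | ⟨j', rfl⟩
    · simpa using hAδ
    · rw [Fin.cons_succ]
      rcases eq_or_ne j' 0 with rfl | hne
      · rw [Function.update_self]
        rw [Fin.succ_zero_eq_one]
        exact Set.union_subset hEδ (by simpa [Fin.succ_zero_eq_one] using hJδ 0)
      · rw [Function.update_of_ne hne]; exact hJδ j'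
  · intro j hj
    rcases Fin.eq_zero_or_eq_succ j with rfl | ⟨j', rfl⟩
    · simpa using hAO hj
    · rw [Fin.cons_succ]
      rcases eq_or_ne j' 0 with rfl | hne
      · rw [Function.update_self]
        have hE : E = ∅ := hEO (by rwa [Fin.succ_zero_eq_one] at hj)
        obtain ⟨x, hx⟩ := hJO 0 hj
        exact ⟨x, by rw [hS, hE, hx, Set.empty_union]⟩
      · rw [Function.update_of_ne hne]
        exact hJO j' hj

theorem stmt_14 {T : Type*} [LinearOrder T] {n : ℕ}
    (δ F : Fin (n + 1) → Set T) (O : Finset (Fin (n + 1)))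
    (hF : DefinesF δ F O) (t₁ : T) (h : t₁ ∈ F 0) :
    ∃ t, t₁ ≤ t ∧ ∃ I : Fin (n + 1) → Set T,
      IsDecomp t₁ t I ∧ (∀ j, I j ⊆ δ j) ∧ (∀ j ∈ O, ∃ x, I j = {x}) := by
  induction n generalizing t₁ with
  | zero =>
    have h0 : F 0 = δ 0 := by
      have := hF.1
      simpa using this
    refine ⟨t₁, le_refl _, fun _ => Set.Icc t₁ t₁, ⟨?_, ?_, ?_, ?_⟩, ?_, ?_⟩
    · intro j; exact ⟨t₁, le_refl _, le_refl _⟩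
    · intro j; simp only [Set.Icc_self]; exact isConvex_singleton' t₁
    · intro i j hij
      rw [Fin.fin_one_eq_zero i, Fin.fin_one_eq_zero j] at hij
      exact absurd hij (lt_irrefl 0)
    · simp [Set.iUnion_const]
    · intro j
      have hj : j = 0 := Fin.fin_one_eq_zero j
      subst hj
      rw [Set.Icc_self, ← h0]
      exact Set.singleton_subset_iff.mpr h
    · intro j _
      exact ⟨t₁, Set.Icc_self t₁⟩
  | succ n ih =>
    -- unfold F 0
    have key := hF.2 0
    rw [Fin.castSucc_zero] at key
    rw [key] at h
    obtain ⟨hδ0, hU⟩ := h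
    simp only [Set.mem_setOf_eq, Fin.succ_zero_eq_one] at hU
    -- the shifted system
    set δ' : Fin (n + 1) → Set T := fun j => δ j.succ with hδ'
    set F' : Fin (n + 1) → Set T := fun j => F j.succ with hF'
    set O' : Finset (Fin (n + 1)) := Finset.univ.filter (fun j => j.succ ∈ O) with hO'
    have hmemO' : ∀ j : Fin (n + 1), j ∈ O' ↔ j.succ ∈ O := by
      intro j; simp [hO']
    have hDF : DefinesF δ' F' O' := by
      constructor
      · show F (Fin.last n).succ = δ (Fin.last n).succ
        rw [Fin.succ_last]
        exact hF.1
      · intro i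
        have key2 := hF.2 i.succ
        show F (i.castSucc).succ = δ' i.castSucc ∩ _
        rw [Fin.succ_castSucc, key2]
        have e1 : δ' i.castSucc = δ i.succ.castSucc := by
          show δ i.castSucc.succ = _
          rw [Fin.succ_castSucc]
        have e2 : (i.castSucc ∈ O') ↔ (i.succ.castSucc ∈ O) := by
          rw [hmemO' i.castSucc, Fin.succ_castSucc]
        have e3 : (i.succ ∈ O') ↔ (i.succ.succ ∈ O) := hmemO' i.succ
        have e4 : F' i.succ = F i.succ.succ := rfl
        rw [e1, e4]
        congr 1
        ext x
        simp only [Set.mem_setOf_eq]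
        simp only [e2, e3]
        exact Iff.rfl
    have hrec : ∀ t₂ : T, t₂ ∈ F 1 → ∃ t, t₂ ≤ t ∧ ∃ J : Fin (n + 1) → Set T,
        IsDecomp t₂ t J ∧ (∀ j, J j ⊆ δ j.succ) ∧
        (∀ j : Fin (n + 1), j.succ ∈ O → ∃ x, J j = {x}) := by
      intro t₂ ht₂
      have ht₂' : t₂ ∈ F' 0 := by
        show t₂ ∈ F (0 : Fin (n + 1)).succ
        rwa [Fin.succ_zero_eq_one]
      obtain ⟨t, h2t, J, hJ, hJδ, hJO⟩ := ih δ' F' O' hDF t₂ ht₂'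
      exact ⟨t, h2t, J, hJ, hJδ, fun j hj => hJO j ((hmemO' j).mpr hj)⟩
    have hF1δ1 : F 1 ⊆ δ 1 := F_sub_delta hF 1
    by_cases h0 : (0 : Fin (n + 2)) ∈ O <;> by_cases h1 : (1 : Fin (n + 2)) ∈ O
    · -- 0 ∈ O, 1 ∈ O : Until ∅ (F 1)
      simp only [h0, h1, ↓reduceIte] at hU
      obtain ⟨t₂, hlt, hmem, hbtw⟩ := hU
      obtain ⟨t, h2t, J, hJ, hJδ, hJO⟩ := hrec t₂ hmem
      refine step_lemma δ O t₁ t₂ hlt {t₁} ∅ ⟨t₁, rfl⟩ (isConvex_singleton' t₁)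
        isConvex_empty' (by simpa using hδ0) (Set.empty_subset _)
        (by simp [hlt, le_refl]) (Set.empty_subset _)
        (by simp) ?_ (fun _ => ⟨t₁, rfl⟩) (fun _ => rfl) t h2t J hJ hJδ hJO
      intro y ⟨hy1, hy2⟩
      rcases eq_or_lt_of_le hy1 with rfl | hy1'
      · exact Or.inl rfl
      · exact absurd (hbtw y hy1' hy2) (Set.notMem_empty y)
    · -- 0 ∈ O, 1 ∉ O : Until (δ 1) (F 1)
      simp only [h0, h1, ↓reduceIte] at hU
      obtain ⟨t₂, hlt, hmem, hbtw⟩ := hU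
      obtain ⟨t, h2t, J, hJ, hJδ, hJO⟩ := hrec t₂ hmem
      refine step_lemma δ O t₁ t₂ hlt {t₁} (Set.Ioo t₁ t₂) ⟨t₁, rfl⟩
        (isConvex_singleton' t₁) (isConvex_Ioo' t₁ t₂)
        (by simpa using hδ0) (fun y hy => hbtw y hy.1 hy.2)
        (by simp [hlt, le_refl]) (fun y hy => ⟨le_of_lt hy.1, le_of_lt hy.2⟩)
        (by rintro a rfl e ⟨he1, _⟩; exact he1) ?_
        (fun _ => ⟨t₁, rfl⟩) (fun hh => absurd hh h1) t h2t J hJ hJδ hJO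
      intro y ⟨hy1, hy2⟩
      rcases eq_or_lt_of_le hy1 with rfl | hy1'
      · exact Or.inl rfl
      · exact Or.inr ⟨hy1', hy2⟩
    · -- 0 ∉ O, 1 ∈ O : Until (δ 0) (F 1)
      simp only [h0, h1, ↓reduceIte] at hU
      obtain ⟨t₂, hlt, hmem, hbtw⟩ := hU
      obtain ⟨t, h2t, J, hJ, hJδ, hJO⟩ := hrec t₂ hmem
      refine step_lemma δ O t₁ t₂ hlt (Set.Ico t₁ t₂) ∅ ⟨t₁, le_refl _, hlt⟩
        (isConvex_Ico' t₁ t₂) isConvex_empty' ?_ (Set.empty_subset _)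
        (le_refl _) (Set.empty_subset _) (by simp) (by simp)
        (fun hh => absurd hh h0) (fun _ => rfl) t h2t J hJ hJδ hJO
      intro y ⟨hy1, hy2⟩
      rcases eq_or_lt_of_le hy1 with rfl | hy1'
      · exact hδ0
      · exact hbtw y hy1' hy2
    · -- 0 ∉ O, 1 ∉ O : UntilStar (δ 0) (F 1)
      simp only [h0, h1, ↓reduceIte] at hU
      obtain ⟨t₂, hlt, K₁, K₂, hK₁ne, hK₂ne, hK₁cx, hK₂cx, hun, hdisj, hord, hP, hQ⟩ := hU
      have ht₂K₂ : t₂ ∈ K₂ := by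
        have : t₂ ∈ K₁ ∪ K₂ := by rw [hun]; exact ⟨le_of_lt hlt, le_refl _⟩
        rcases this with h' | h'
        · exfalso
          obtain ⟨b, hb⟩ := hK₂ne
          have hb2 : b ≤ t₂ := by
            have : b ∈ K₁ ∪ K₂ := Or.inr hb
            rw [hun] at this
            exact this.2
          exact absurd (hord t₂ h' b hb) (not_lt.mpr hb2)
        · exact h'
      obtain ⟨t, h2t, J, hJ, hJδ, hJO⟩ := hrec t₂ (hQ ht₂K₂)
      have hK₁sub : K₁ ⊆ Set.Ico t₁ t₂ := by
        intro x hx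
        have hx' : x ∈ K₁ ∪ K₂ := Or.inl hx
        rw [hun] at hx'
        exact ⟨hx'.1, hord x hx t₂ ht₂K₂⟩
      have hK₂sub : K₂ ⊆ Set.Icc t₁ t₂ := by
        intro x hx
        have hx' : x ∈ K₁ ∪ K₂ := Or.inr hx
        rwa [hun] at hx'
      refine step_lemma δ O t₁ t₂ hlt K₁ K₂ hK₁ne hK₁cx hK₂cx hP
        (fun x hx => hF1δ1 (hQ hx)) hK₁sub hK₂sub hord
        (fun x hx => by rw [hun]; exact ⟨hx.1, le_of_lt hx.2⟩)
        (fun hh => absurd hh h0) (fun hh => absurd hh h1) t h2t J hJ hJδ hJO
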